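/- Let n be a nonnegative integer, let a, b, c be complex numbers, and define T_n(a,b,c) = (1+a−c)_n (c)_n · _4F_3(−n, a/2, (a+1)/2, b ; a, 1+a−c, c ; 4) whenever (a)_n, (1+a−c)_n, (c)_n are all nonzero. Assume (a)_n ≠ 0, (1+a−c)_n ≠ 0, (c)_n ≠ 0, (c−b−n)_n ≠ 0, (1−b−n)_n ≠ 0, and (c−a−n)_n ≠ 0. Then T_n(a,b,c) = T_n(c−b−n, c−a−n, 1−b−n). -/

import Mathlib

open Finset

/-- The rising factorial (Pochhammer symbol) `(a)_k = a(a+1)⋯(a+k-1)`. -/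
noncomputable def poch (a : ℂ) (k : ℕ) : ℂ := ∏ i ∈ Finset.range k, (a + i)

/-- `T n a b c = (1+a-c)_n (c)_n · ₄F₃(-n, a/2, (a+1)/2, b ; a, 1+a-c, c ; 4)`. -/
noncomputable def T (n : ℕ) (a b c : ℂ) : ℂ :=
  poch (1 + a - c) n * poch c n *
    ∑ k ∈ Finset.range (n + 1),
      (poch (-(n : ℂ)) k * poch (a / 2) k * poch ((a + 1) / 2) k * poch b k) /
        ((Nat.factorial k : ℂ) * poch a k * poch (1 + a - c) k * poch c k) * (4 : ℂ) ^ k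

/-! ### Basic lemmas on `poch` -/

lemma poch_zero (a : ℂ) : poch a 0 = 1 := by simp [poch]

lemma poch_succ (a : ℂ) (k : ℕ) : poch a (k+1) = poch a k * (a + k) :=
  Finset.prod_range_succ _ _

lemma poch_one (a : ℂ) : poch a 1 = a := by simp [poch]

lemma poch_add (a : ℂ) (m k : ℕ) : poch a (m + k) = poch a m * poch (a + m) k := by
  induction k with
  | zero => simp [poch_zero]
  | succ k ih =>
    rw [← add_assoc, poch_succ, ih, poch_succ, mul_assoc]
    congr 2
    push_cast
    ring

lemma poch_ne_zero_of_le {a : ℂ} {m : ℕ} (h : poch a m ≠ 0) {k : ℕ} (hk : k ≤ m) :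
    poch a k ≠ 0 := by
  rcases Nat.exists_eq_add_of_le hk with ⟨t, rfl⟩
  rw [poch_add] at h
  exact fun hz => h (by rw [hz, zero_mul])

lemma poch_reflect (a : ℂ) (k : ℕ) : poch (1 - a - k) k = (-1)^k * poch a k := by
  induction k generalizing a with
  | zero => simp [poch_zero]
  | succ k ih =>
    have h1 : poch a (k+1) = a * poch (a+1) k := by
      have := poch_add a 1 k
      rw [poch_one] at this
      rw [add_comm 1 k] at this
      simpa using this
    rw [poch_succ, h1]
    have h2 : (1 : ℂ) - a - (k+1 : ℕ) = 1 - (a+1) - k := by push_cast; ring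
    rw [h2, ih (a+1)]
    have h3 : (1 : ℂ) - (a+1) - k + k = -a := by ring
    rw [h3]
    ring

lemma poch_double (a : ℂ) (k : ℕ) :
    poch (a/2) k * poch ((a+1)/2) k * 4^k = poch a (2*k) := by
  induction k with
  | zero => simp [poch_zero]
  | succ k ih =>
    have h2 : 2 * (k+1) = (2*k) + 1 + 1 := by ring
    rw [h2, poch_succ, poch_succ, poch_succ, poch_succ, ← ih]
    push_cast
    ring

lemma poch_neg_nat (n k : ℕ) (hk : k ≤ n) :
    poch (-(n:ℂ)) k = (-1)^k * (k.factorial : ℂ) * (n.choose k : ℂ) := by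
  have : poch (-(n:ℂ)) k = (-1)^k * (n.descFactorial k : ℂ) := by
    induction k with
    | zero => simp [poch_zero]
    | succ k ih =>
      have hk' : k ≤ n := Nat.le_of_succ_le hk
      rw [poch_succ, ih hk', Nat.descFactorial_succ]
      have : ((n - k : ℕ) : ℂ) = (n : ℂ) - k := by
        push_cast [Nat.cast_sub hk']; ring
      push_cast [this]
      ring
  rw [this, Nat.descFactorial_eq_factorial_mul_choose]
  push_cast
  ring

/-! ### Vandermonde-type identities -/

lemma poch_vandermonde (m : ℕ) (X Y : ℂ) :
    poch (X+Y) m = ∑ i ∈ range (m+1), (m.choose i : ℂ) * poch X i * poch Y (m-i) := by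
  induction m with
  | zero => simp [poch_zero]
  | succ m ih =>
    rw [poch_succ, ih, Finset.sum_mul]
    have key : ∀ i ∈ range (m+1),
        (m.choose i : ℂ) * poch X i * poch Y (m-i) * (X + Y + m)
        = (m.choose i : ℂ) * poch X (i+1) * poch Y (m-i)
          + (m.choose i : ℂ) * poch X i * poch Y (m-i+1) := by
      intro i hi
      have hi' : i ≤ m := Nat.lt_succ_iff.mp (mem_range.mp hi)
      rw [poch_succ, poch_succ]
      have hc : ((m - i : ℕ) : ℂ) = (m : ℂ) - i := by push_cast [Nat.cast_sub hi']; ring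
      rw [hc]
      ring
    rw [Finset.sum_congr rfl key, Finset.sum_add_distrib]
    have h2 : ∑ i ∈ range (m+1), (m.choose i : ℂ) * poch X i * poch Y (m-i+1)
        = ∑ i ∈ range (m+1), (m.choose i : ℂ) * poch X i * poch Y (m+1-i) := by
      refine Finset.sum_congr rfl fun i hi => ?_
      have hi' : i ≤ m := Nat.lt_succ_iff.mp (mem_range.mp hi)
      rw [show m - i + 1 = m + 1 - i by omega]
    rw [h2]
    rw [Finset.sum_range_succ' (fun i => ((m+1).choose i : ℂ) * poch X i * poch Y (m+1-i)) (m+1)]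
    simp only [Nat.choose_succ_succ, Nat.cast_add, Nat.choose_zero_right, poch_zero]
    have expand : ∑ i ∈ range (m+1),
        ((m.choose i : ℂ) + (m.choose (i+1) : ℂ)) * poch X (i+1) * poch Y (m+1-(i+1))
        = (∑ i ∈ range (m+1), (m.choose i : ℂ) * poch X (i+1) * poch Y (m-i))
          + ∑ i ∈ range (m+1), (m.choose (i+1) : ℂ) * poch X (i+1) * poch Y (m-i) := by
      rw [← Finset.sum_add_distrib]
      refine Finset.sum_congr rfl fun i hi => ?_
      rw [show m + 1 - (i+1) = m - i by omega]
      ring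
    rw [expand]
    have h3 : ∑ i ∈ range (m+1), (m.choose (i+1) : ℂ) * poch X (i+1) * poch Y (m-i)
        = ∑ i ∈ range (m+1), (m.choose i : ℂ) * poch X i * poch Y (m+1-i)
          - (m.choose 0 : ℂ) * poch X 0 * poch Y (m+1) := by
      rw [Finset.sum_range_succ (fun i => (m.choose (i+1) : ℂ) * poch X (i+1) * poch Y (m-i)) m]
      rw [Finset.sum_range_succ' (fun i => (m.choose i : ℂ) * poch X i * poch Y (m+1-i)) m]
      simp only [Nat.choose_succ_self, Nat.cast_zero, zero_mul, add_zero, Nat.sub_zero,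
        add_sub_cancel_right]
      refine Finset.sum_congr rfl fun i hi => ?_
      rw [show m + 1 - (i+1) = m - i by omega]
    rw [h3]
    simp [poch_zero]
    ring

lemma poch_star (m : ℕ) (x y : ℂ) :
    ∑ i ∈ range (m+1), (m.choose i : ℂ) * poch (x+i) (m-i) * poch (y+(m-i:ℕ)) i
    = poch (x+y+m-1) m := by
  have refl1 : ∀ (A : ℂ) (k : ℕ), poch A k = (-1)^k * poch (1 - A - k) k := by
    intro A k
    rw [poch_reflect, ← mul_assoc, ← mul_pow]
    simp
  have key : ∀ i ∈ range (m+1),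
      (m.choose i : ℂ) * poch (x+i) (m-i) * poch (y+(m-i:ℕ)) i
      = (-1)^m * ((m.choose i : ℂ) * poch (1-y-m) i * poch (1-x-m) (m-i)) := by
    intro i hi
    have hi' : i ≤ m := Nat.lt_succ_iff.mp (mem_range.mp hi)
    have hc : ((m - i : ℕ) : ℂ) = (m : ℂ) - i := by push_cast [Nat.cast_sub hi']; ring
    rw [refl1 (x+i) (m-i), refl1 (y+(m-i:ℕ)) i]
    rw [hc]
    have e1 : (1:ℂ) - (x + i) - ((m:ℂ) - i) = 1 - x - m := by ring
    have e2 : (1:ℂ) - (y + ((m:ℂ) - i)) - i = 1 - y - m := by ring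
    rw [e1, e2]
    have hsgn : ((-1:ℂ))^(m-i) * (-1)^i = (-1)^m := by
      rw [← pow_add]
      congr 1
      omega
    calc (m.choose i : ℂ) * ((-1)^(m-i) * poch (1-x-m) (m-i)) * ((-1)^i * poch (1-y-m) i)
        = ((-1:ℂ))^(m-i) * (-1)^i * ((m.choose i : ℂ) * poch (1-y-m) i * poch (1-x-m) (m-i)) := by
          ring
      _ = (-1)^m * ((m.choose i : ℂ) * poch (1-y-m) i * poch (1-x-m) (m-i)) := by rw [hsgn]
  rw [Finset.sum_congr rfl key, ← Finset.mul_sum, ← poch_vandermonde]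
  rw [refl1 (x+y+m-1) m]
  have e3 : (1:ℂ) - (x+y+(m:ℂ)-1) - m = (1-y-m) + (1-x-m) := by ring
  rw [e3]

lemma poch_inner (m K : ℕ) (x y : ℂ) :
    ∑ i ∈ range (m+1), (m.choose i : ℂ) * poch (x+i) (m-i+K) * poch (y+(m-i:ℕ)) (i+K)
    = poch (x+y+m-1) m * poch (x+m) K * poch (y+m) K := by
  have key : ∀ i ∈ range (m+1),
      (m.choose i : ℂ) * poch (x+i) (m-i+K) * poch (y+(m-i:ℕ)) (i+K)
      = ((m.choose i : ℂ) * poch (x+i) (m-i) * poch (y+(m-i:ℕ)) i)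
          * (poch (x+m) K * poch (y+m) K) := by
    intro i hi
    have hi' : i ≤ m := Nat.lt_succ_iff.mp (mem_range.mp hi)
    have hc : ((m - i : ℕ) : ℂ) = (m : ℂ) - i := by push_cast [Nat.cast_sub hi']; ring
    rw [poch_add (x+i) (m-i) K, poch_add (y+(m-i:ℕ)) i K]
    have e1 : x + i + ((m-i:ℕ):ℂ) = x + m := by rw [hc]; ring
    have e2 : y + ((m-i:ℕ):ℂ) + i = y + m := by rw [hc]; ring
    rw [e1, e2]
    ring
  rw [Finset.sum_congr rfl key, ← Finset.sum_mul, poch_star]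
  ring

/-! ### The polynomial forms `P`, `Q`, `W` -/

noncomputable def P (n : ℕ) (a b c : ℂ) : ℂ :=
  ∑ k ∈ range (n+1), (-1)^k * (n.choose k : ℂ) * poch b k * poch (a+k) k *
    poch (1+a-c+k) (n-k) * poch (c+k) (n-k)

noncomputable def Q (n : ℕ) (x y z : ℂ) : ℂ :=
  ∑ k ∈ range (n+1), (n.choose k : ℂ) * poch (x+y-1+k) k * poch (z+(n:ℂ)-k) k *
    poch (x+k) (n-k) * poch (y+k) (n-k)

noncomputable def W (n : ℕ) (x y z : ℂ) : ℂ :=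
  ∑ k ∈ range (n+1), ∑ i ∈ range (n-k+1),
    (n.choose k : ℂ) * ((n-k).choose i : ℂ) * poch (x+i) (n-i) *
      poch (y+((n-k-i:ℕ):ℂ)) (i+k) * poch (z+k) (n-k)

lemma T_eq_P (n : ℕ) (a b c : ℂ) (ha : poch a n ≠ 0) (hac : poch (1+a-c) n ≠ 0)
    (hc : poch c n ≠ 0) : T n a b c = P n a b c := by
  rw [T, P, Finset.mul_sum]
  refine Finset.sum_congr rfl fun k hk => ?_
  have hkn : k ≤ n := Nat.lt_succ_iff.mp (mem_range.mp hk)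
  have hak : poch a k ≠ 0 := poch_ne_zero_of_le ha hkn
  have hack : poch (1+a-c) k ≠ 0 := poch_ne_zero_of_le hac hkn
  have hck : poch c k ≠ 0 := poch_ne_zero_of_le hc hkn
  have hfk : ((k.factorial : ℂ)) ≠ 0 := Nat.cast_ne_zero.mpr k.factorial_ne_zero
  have key : poch (a/2) k * poch ((a+1)/2) k * (4:ℂ)^k = poch a k * poch (a+k) k := by
    rw [poch_double, two_mul, poch_add]
  have hsx : poch (1+a-c) n = poch (1+a-c) k * poch (1+a-c+k) (n-k) := by
    rw [← poch_add]; congr 1; omega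
  have hsc : poch c n = poch c k * poch (c+k) (n-k) := by
    rw [← poch_add]; congr 1; omega
  rw [poch_neg_nat n k hkn, hsx, hsc]
  field_simp
  linear_combination (n.choose k : ℂ) * poch b k *
    poch (1+a-c+k) (n-k) * poch (c+k) (n-k) * key

lemma P_eq_Q (n : ℕ) (a b c : ℂ) : P n a b c = Q n (1+a-c) c (1-b-n) := by
  rw [P, Q]
  refine Finset.sum_congr rfl fun k hk => ?_
  have hb : poch (1-b-(n:ℂ)+(n:ℂ)-k) k = (-1)^k * poch b k := by
    have e : (1:ℂ)-b-(n:ℂ)+(n:ℂ)-(k:ℂ) = 1 - b - k := by ring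
    rw [e, poch_reflect]
  rw [hb]
  have e1 : (1+a-c)+c-1+(k:ℂ) = a + k := by ring
  rw [e1]
  ring

lemma Q_swap_xy (n : ℕ) (x y z : ℂ) : Q n x y z = Q n y x z := by
  rw [Q, Q]
  refine Finset.sum_congr rfl fun k hk => ?_
  have e1 : x+y-1+(k:ℂ) = y+x-1+k := by ring
  rw [e1]
  ring

lemma Q_eq_W (n : ℕ) (x y z : ℂ) : Q n x y z = W n x y z := by
  rw [Q, W]
  have inner : ∀ k ∈ range (n+1),
      ∑ i ∈ range (n-k+1), (n.choose k : ℂ) * ((n-k).choose i : ℂ) * poch (x+i) (n-i) *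
        poch (y+((n-k-i:ℕ):ℂ)) (i+k) * poch (z+k) (n-k)
      = (n.choose k : ℂ) * (poch (x+y+((n-k:ℕ):ℂ)-1) (n-k) * poch (x+((n-k:ℕ):ℂ)) k *
          poch (y+((n-k:ℕ):ℂ)) k) * poch (z+k) (n-k) := by
    intro k hk
    have hkn : k ≤ n := Nat.lt_succ_iff.mp (mem_range.mp hk)
    rw [← poch_inner (n-k) k x y, Finset.mul_sum, Finset.sum_mul]
    refine Finset.sum_congr rfl fun i hi => ?_
    have hin : i ≤ n - k := Nat.lt_succ_iff.mp (mem_range.mp hi)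
    rw [show (n-k) - i + k = n - i by omega]
    ring
  rw [Finset.sum_congr rfl inner]
  rw [← Finset.sum_range_reflect
    (fun k => (n.choose k : ℂ) * (poch (x+y+((n-k:ℕ):ℂ)-1) (n-k) * poch (x+((n-k:ℕ):ℂ)) k *
      poch (y+((n-k:ℕ):ℂ)) k) * poch (z+k) (n-k)) (n+1)]
  refine Finset.sum_congr rfl fun k hk => ?_
  have hkn : k ≤ n := Nat.lt_succ_iff.mp (mem_range.mp hk)
  simp only [Nat.add_sub_cancel]
  rw [show n - (n - k) = k by omega, Nat.choose_symm hkn]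
  have ec : ((n-k:ℕ):ℂ) = (n:ℂ) - k := by push_cast [Nat.cast_sub hkn]; ring
  rw [ec]
  rw [show x+y+(k:ℂ)-1 = x+y-1+(k:ℂ) by ring, show z+((n:ℂ)-(k:ℂ)) = z+(n:ℂ)-k by ring]
  ring

lemma multinom_symm (n k i : ℕ) (h : k + i ≤ n) :
    n.choose k * (n-k).choose i = n.choose (n-k-i) * (k+i).choose i := by
  have h1 : n.choose k * (n-k).choose i * (k.factorial * i.factorial * (n-k-i).factorial)
      = n.factorial := by
    have a1 := Nat.choose_mul_factorial_mul_factorial (show k ≤ n by omega)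
    have a2 := Nat.choose_mul_factorial_mul_factorial (show i ≤ n - k by omega)
    calc n.choose k * (n-k).choose i * (k.factorial * i.factorial * (n-k-i).factorial)
        = (n.choose k * k.factorial * ((n-k).choose i * i.factorial * (n-k-i).factorial)) := by
          ring
      _ = n.choose k * k.factorial * (n-k).factorial := by rw [a2]
      _ = n.factorial := a1
  have h2 : n.choose (n-k-i) * (k+i).choose i * (k.factorial * i.factorial * (n-k-i).factorial)
      = n.factorial := by
    have a1 : n.choose (n-k-i) * (n-k-i).factorial * (k+i).factorial = n.factorial := by
      have h0 := Nat.choose_mul_factorial_mul_factorial (show n-k-i ≤ n by omega)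
      rwa [show n - (n-k-i) = k + i by omega] at h0
    have a2 : (k+i).choose i * i.factorial * k.factorial = (k+i).factorial := by
      have h0 := Nat.choose_mul_factorial_mul_factorial (show i ≤ k + i by omega)
      rwa [show k + i - i = k by omega] at h0
    calc n.choose (n-k-i) * (k+i).choose i * (k.factorial * i.factorial * (n-k-i).factorial)
        = n.choose (n-k-i) * (n-k-i).factorial * ((k+i).choose i * i.factorial * k.factorial) := by
          ring
      _ = n.choose (n-k-i) * (n-k-i).factorial * (k+i).factorial := by rw [a2]
      _ = n.factorial := a1
  have hpos : 0 < k.factorial * i.factorial * (n-k-i).factorial :=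
    Nat.mul_pos (Nat.mul_pos k.factorial_pos i.factorial_pos) (n-k-i).factorial_pos
  exact Nat.eq_of_mul_eq_mul_right hpos (h1.trans h2.symm)

set_option linter.unnecessarySeqFocus false in
lemma W_swap_yz (n : ℕ) (x y z : ℂ) : W n x y z = W n x z y := by
  rw [W, W]
  rw [Finset.sum_sigma', Finset.sum_sigma']
  refine Finset.sum_nbij' (fun p => ⟨n - p.1 - p.2, p.2⟩) (fun p => ⟨n - p.1 - p.2, p.2⟩)
    ?_ ?_ ?_ ?_ ?_
  · intro p hp
    simp only [Finset.mem_sigma, Finset.mem_range] at hp ⊢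
    omega
  · intro p hp
    simp only [Finset.mem_sigma, Finset.mem_range] at hp ⊢
    omega
  · intro p hp
    simp only [Finset.mem_sigma, Finset.mem_range] at hp
    ext <;> simp <;> omega
  · intro p hp
    simp only [Finset.mem_sigma, Finset.mem_range] at hp
    ext <;> simp <;> omega
  · intro p hp
    simp only [Finset.mem_sigma, Finset.mem_range] at hp
    obtain ⟨k, i⟩ := p
    simp only at hp ⊢
    have hki : k + i ≤ n := by omega
    have hco : (n.choose k : ℂ) * ((n-k).choose i : ℂ)
        = (n.choose (n-k-i) : ℂ) * (((k+i)).choose i : ℂ) := by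
      exact_mod_cast congrArg (fun t : ℕ => (t : ℂ)) (multinom_symm n k i hki)
    have e1 : n - (n-k-i) - i = k := by omega
    have e2 : i + (n-k-i) = n - k := by omega
    have e3 : n - (n-k-i) = k + i := by omega
    rw [e1, e2, e3, show i+k = k+i by omega]
    linear_combination (poch (x+i) (n-i) * poch (y + ((n-k-i:ℕ):ℂ)) (k+i) *
      poch (z+k) (n-k)) * hco

theorem stmt_4 (n : ℕ) (a b c : ℂ)
    (ha : poch a n ≠ 0) (hac : poch (1 + a - c) n ≠ 0) (hc : poch c n ≠ 0)
    (hcb : poch (c - b - (n : ℂ)) n ≠ 0) (hb : poch (1 - b - (n : ℂ)) n ≠ 0)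
    (hca : poch (c - a - (n : ℂ)) n ≠ 0) :
    T n a b c = T n (c - b - (n : ℂ)) (c - a - (n : ℂ)) (1 - b - (n : ℂ)) := by
  have hac' : poch (1 + (c - b - (n:ℂ)) - (1 - b - (n:ℂ))) n ≠ 0 := by
    rw [show (1 + (c - b - (n:ℂ)) - (1 - b - (n:ℂ))) = c by ring]
    exact hc
  have h1 : T n a b c = P n a b c := T_eq_P n a b c ha hac hc
  have h2 : T n (c - b - (n:ℂ)) (c - a - (n:ℂ)) (1 - b - (n:ℂ))
      = P n (c - b - (n:ℂ)) (c - a - (n:ℂ)) (1 - b - (n:ℂ)) :=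
    T_eq_P n _ _ _ hcb hac' hb
  rw [h1, h2, P_eq_Q, P_eq_Q]
  rw [show (1 + (c - b - (n:ℂ)) - (1 - b - (n:ℂ))) = c by ring]
  rw [show (1 - (c - a - (n:ℂ)) - (n:ℂ)) = 1 + a - c by ring]
  -- goal : Q n (1+a-c) c (1-b-n) = Q n c (1-b-n) (1+a-c)
  rw [Q_swap_xy, Q_eq_W, W_swap_yz, ← Q_eq_W]
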